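/- Let W be a k-wheel and T a coupled spanning tree of W. Suppose for indices 1 ≤ i < j ≤ k that val_T(v_i) = 1, val_T(v_{i+1}) = ⋯ = val_T(v_j) = 2, and val_T(v_{j+1}) = 1 (or the same with 1 and 2 interchanged). Then exactly one of the two chords v_i v_{i+1} and v_j v_{j+1} belongs to T. -/

import Mathlib

/-- The edge set of the `k`-wheel: center `none`, spokes `some i`, `i : ZMod k`. -/
def wheelEdges (k : ℕ) : Set (Sym2 (Option (ZMod k))) :=
  {e | ∃ i : ZMod k, e = s(none, some i) ∨ e = s(some i, some (i + 1))}

/-- `T` is a coupled spanning tree of the `k`-wheel. -/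
def IsCoupledTree (k : ℕ) (T : Set (Sym2 (Option (ZMod k)))) : Prop :=
  T ⊆ wheelEdges k ∧ (SimpleGraph.fromEdgeSet T).IsTree ∧
    (SimpleGraph.fromEdgeSet (wheelEdges k \ T)).IsTree

/-- The valence of a vertex `x` with respect to an edge set `T`. -/
noncomputable def valOf {k : ℕ} (T : Set (Sym2 (Option (ZMod k))))
    (x : Option (ZMod k)) : ℕ :=
  {e ∈ T | x ∈ e}.ncard

namespace WheelAux

open SimpleGraph
open scoped Classical

def Vtx (k m : ℕ) : Option (ZMod k) := some (m : ZMod k)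
def spk (k m : ℕ) : Sym2 (Option (ZMod k)) := s(none, Vtx k m)
def chd (k m : ℕ) : Sym2 (Option (ZMod k)) := s(Vtx k m, Vtx k (m + 1))

lemma cast_ne {k : ℕ} {a b : ℕ} (hab : a < b) (h : b - a < k) :
    (a : ZMod k) ≠ (b : ZMod k) := by
  intro h'
  rw [ZMod.natCast_eq_natCast_iff] at h'
  have h2 := (Nat.modEq_iff_dvd' hab.le).mp h'
  have h3 := Nat.le_of_dvd (by omega) h2
  omega

lemma vtx_ne {k : ℕ} {a b : ℕ} (hab : a < b) (h : b - a < k) : Vtx k a ≠ Vtx k b := by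
  simp only [Vtx, ne_eq, Option.some.injEq]
  exact cast_ne hab h

lemma vtx_eq {k : ℕ} {a b : ℕ} (hab : a ≤ b) (h : k ∣ b - a) : Vtx k a = Vtx k b := by
  simp only [Vtx, Option.some.injEq]
  rw [ZMod.natCast_eq_natCast_iff]
  exact (Nat.modEq_iff_dvd' hab).mpr h

lemma vtx_succ' (k m : ℕ) : Vtx k (m + 1) = some ((m : ZMod k) + 1) := by simp [Vtx]

lemma spk_mem_wheel (k m : ℕ) : spk k m ∈ wheelEdges k := ⟨(m : ZMod k), Or.inl rfl⟩

lemma chd_mem_wheel (k m : ℕ) : chd k m ∈ wheelEdges k := by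
  refine ⟨(m : ZMod k), Or.inr ?_⟩
  rw [chd, vtx_succ', Vtx]

lemma spk_ne_chd (k a b : ℕ) : spk k a ≠ chd k b := by
  simp [spk, chd, Vtx, Sym2.eq_iff]

lemma chd_ne_chd {k : ℕ} (hk : 3 ≤ k) {m : ℕ} (hm : 1 ≤ m) : chd k (m - 1) ≠ chd k m := by
  have h1 : m - 1 + 1 = m := by omega
  intro h
  rw [show chd k (m-1) = s(Vtx k (m-1), Vtx k m) from by rw [chd, h1], chd, Sym2.eq_iff] at h
  rcases h with ⟨h, -⟩ | ⟨h, -⟩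
  · exact vtx_ne (by omega) (by omega) h
  · exact vtx_ne (by omega) (by omega) h

lemma ncard_inter_single {α : Type*} (T : Set α) (a : α) :
    (T ∩ {a}).ncard = if a ∈ T then 1 else 0 := by
  by_cases h : a ∈ T
  · rw [Set.inter_eq_right.mpr (by simpa using h), Set.ncard_singleton, if_pos h]
  · rw [Set.inter_singleton_eq_empty.mpr h, Set.ncard_empty, if_neg h]

lemma ncard_inter_triple {α : Type*} {x y z : α} (hxy : x ≠ y) (hxz : x ≠ z) (hyz : y ≠ z)
    (T : Set α) :
    (T ∩ {x, y, z}).ncard =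
      (if x ∈ T then 1 else 0) + (if y ∈ T then 1 else 0) + (if z ∈ T then 1 else 0) := by
  have hsplit : T ∩ {x, y, z} = (T ∩ {x}) ∪ ((T ∩ {y}) ∪ (T ∩ {z})) := by
    ext t
    simp only [Set.mem_inter_iff, Set.mem_insert_iff, Set.mem_singleton_iff, Set.mem_union]
    tauto
  have hfin : ∀ a : α, (T ∩ {a}).Finite := fun a =>
    Set.Finite.inter_of_right (Set.finite_singleton a) T
  have hd1 : Disjoint (T ∩ {y}) (T ∩ {z}) := by
    rw [Set.disjoint_left]
    rintro t ⟨_, rfl⟩ ⟨_, h⟩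
    exact hyz (by simpa using h)
  have hd2 : Disjoint (T ∩ {x}) ((T ∩ {y}) ∪ (T ∩ {z})) := by
    rw [Set.disjoint_left]
    rintro t ⟨_, rfl⟩ (⟨_, h⟩ | ⟨_, h⟩)
    · exact hxy (by simpa using h)
    · exact hxz (by simpa using h)
  rw [hsplit, Set.ncard_union_eq hd2 (hfin x) ((hfin y).union (hfin z)),
    Set.ncard_union_eq hd1 (hfin y) (hfin z), ncard_inter_single, ncard_inter_single,
    ncard_inter_single]
  ring

lemma val_formula {k : ℕ} (hk : 3 ≤ k) {T : Set (Sym2 (Option (ZMod k)))}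
    (hsub : T ⊆ wheelEdges k) {m : ℕ} (hm : 1 ≤ m) :
    valOf T (Vtx k m) = (if spk k m ∈ T then 1 else 0)
      + (if chd k (m - 1) ∈ T then 1 else 0) + (if chd k m ∈ T then 1 else 0) := by
  have hmm : ((m - 1 : ℕ) : ZMod k) = (m : ZMod k) - 1 := by
    push_cast [hm]; ring
  have hm1 : m - 1 + 1 = m := by omega
  have hset : {e | e ∈ T ∧ Vtx k m ∈ e} = T ∩ {spk k m, chd k (m - 1), chd k m} := by
    ext e
    simp only [Set.mem_setOf_eq, Set.mem_inter_iff, Set.mem_insert_iff, Set.mem_singleton_iff]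
    constructor
    · rintro ⟨heT, hme⟩
      refine ⟨heT, ?_⟩
      obtain ⟨t, rfl | rfl⟩ := hsub heT
      · rw [Sym2.mem_iff] at hme
        rcases hme with h | h
        · exact absurd h (by simp [Vtx])
        · left; rw [spk, ← h]
      · rw [Sym2.mem_iff] at hme
        rcases hme with h | h
        · right; right
          simp only [Vtx, Option.some.injEq] at h
          subst h
          rw [chd, vtx_succ', Vtx]
        · right; left
          simp only [Vtx, Option.some.injEq] at h
          have ht : t = ((m - 1 : ℕ) : ZMod k) := by rw [hmm, h]; ring
          rw [chd, hm1, show Vtx k (m-1) = some t from by rw [Vtx, ht],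
            show Vtx k m = some (t + 1) from by rw [Vtx, h]]
    · rintro ⟨heT, rfl | rfl | rfl⟩
      · exact ⟨heT, by simp [spk]⟩
      · exact ⟨heT, by rw [chd, hm1]; simp⟩
      · exact ⟨heT, by simp [chd]⟩
  show ({e | e ∈ T ∧ Vtx k m ∈ e}).ncard = _
  rw [hset, ncard_inter_triple (spk_ne_chd k m (m-1)) (spk_ne_chd k m m) (chd_ne_chd hk hm)]



lemma walk_mem {V : Type*} {G : SimpleGraph V} {A : Set V}
    (hA : ∀ x y, x ∈ A → G.Adj x y → y ∈ A) {x y : V} (w : G.Walk x y) : x ∈ A → y ∈ A := by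
  induction w with
  | nil => exact id
  | cons h p ih => exact fun hx => ih (hA _ _ hx h)

lemma chain_reach {V : Type*} {G : SimpleGraph V} (f : ℕ → V) (a b : ℕ) (hab : a ≤ b)
    (h : ∀ t, a ≤ t → t < b → G.Adj (f t) (f (t + 1))) : G.Reachable (f a) (f b) := by
  induction b with
  | zero =>
    obtain rfl : a = 0 := by omega
    exact Reachable.refl _
  | succ n ih =>
    rcases Nat.lt_or_ge a (n + 1) with h1 | h1
    · exact (ih (by omega) (fun t ht ht' => h t ht (by omega))).trans
        (h n (by omega) (by omega)).reachable
    · obtain rfl : a = n + 1 := by omega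
      exact Reachable.refl _

/-- The three possible neighbours of a rim vertex in a subgraph of the wheel. -/
lemma adj_cases {k : ℕ} {T : Set (Sym2 (Option (ZMod k)))} (hsub : T ⊆ wheelEdges k)
    {m : ℕ} (hm : 1 ≤ m) {y : Option (ZMod k)}
    (h : (SimpleGraph.fromEdgeSet T).Adj (Vtx k m) y) :
    (spk k m ∈ T ∧ y = none) ∨ (chd k m ∈ T ∧ y = Vtx k (m + 1)) ∨
      (chd k (m - 1) ∈ T ∧ y = Vtx k (m - 1)) := by
  rw [SimpleGraph.fromEdgeSet_adj] at h
  obtain ⟨hmem, hne⟩ := h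
  have hmm : ((m - 1 : ℕ) : ZMod k) = (m : ZMod k) - 1 := by push_cast [hm]; ring
  have hm1 : m - 1 + 1 = m := by omega
  obtain ⟨t, he | he⟩ := hsub hmem
  · rw [Sym2.eq_iff] at he
    rcases he with ⟨h1, -⟩ | ⟨h1, h2⟩
    · exact absurd h1 (by simp [Vtx])
    · left
      subst h2
      refine ⟨?_, rfl⟩
      rw [spk, Sym2.eq_swap]
      exact hmem
  · rw [Sym2.eq_iff] at he
    rcases he with ⟨h1, h2⟩ | ⟨h1, h2⟩
    · right; left
      simp only [Vtx, Option.some.injEq] at h1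
      subst h2
      subst h1
      exact ⟨by rw [chd, vtx_succ', Vtx]; exact hmem, by rw [vtx_succ']⟩
    · right; right
      simp only [Vtx, Option.some.injEq] at h1
      have ht : t = ((m - 1 : ℕ) : ZMod k) := by rw [hmm, h1]; ring
      subst h2
      rw [show Vtx k m = some (t + 1) from by rw [Vtx, h1]] at hmem
      constructor
      · rw [chd, hm1, show Vtx k (m-1) = some t from by rw [Vtx, ht],
          show Vtx k m = some (t + 1) from by rw [Vtx, h1], Sym2.eq_swap]
        exact hmem
      · rw [Vtx, ht]

/-- complement valence -/
lemma val_add {k : ℕ} (hk : 3 ≤ k) {T : Set (Sym2 (Option (ZMod k)))}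
    (hsub : T ⊆ wheelEdges k) {m : ℕ} (hm : 1 ≤ m) :
    valOf T (Vtx k m) + valOf (wheelEdges k \ T) (Vtx k m) = 3 := by
  have h1 : (spk k m ∈ wheelEdges k \ T) ↔ spk k m ∉ T := by
    simp [Set.mem_diff, spk_mem_wheel]
  have h2 : (chd k (m - 1) ∈ wheelEdges k \ T) ↔ chd k (m - 1) ∉ T := by
    simp [Set.mem_diff, chd_mem_wheel]
  have h3 : (chd k m ∈ wheelEdges k \ T) ↔ chd k m ∉ T := by
    simp [Set.mem_diff, chd_mem_wheel]
  rw [val_formula hk hsub hm, val_formula hk Set.diff_subset hm]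
  simp only [h1, h2, h3]
  split_ifs <;> omega

lemma bothOut {k : ℕ} (hk : 3 ≤ k) {T : Set (Sym2 (Option (ZMod k)))}
    (hsub : T ⊆ wheelEdges k) (ht : (fromEdgeSet T).IsTree)
    {i j : ℕ} (hi : 1 ≤ i) (hij : i < j) (hj : j ≤ k)
    (hmid : ∀ m : ℕ, i < m → m ≤ j → valOf T (Vtx k m) = 2)
    (hci : chd k i ∉ T) (hcj : chd k j ∉ T) : False := by
  classical
  rcases Nat.lt_or_ge (i + 1) j with hij2 | hij2
  swap
  · obtain rfl : j = i + 1 := by omega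
    have h := hmid (i + 1) (by omega) le_rfl
    rw [val_formula hk hsub (by omega), Nat.add_sub_cancel, if_neg hci, if_neg hcj] at h
    split_ifs at h <;> omega
  have hstep : spk k (i + 1) ∈ T ∧ chd k (i + 1) ∈ T := by
    have h := hmid (i + 1) (by omega) (by omega)
    rw [val_formula hk hsub (by omega), Nat.add_sub_cancel, if_neg hci] at h
    constructor
    · by_contra hc; rw [if_neg hc] at h; split_ifs at h <;> omega
    · by_contra hc; rw [if_neg hc] at h; split_ifs at h <;> omega
  have hex : ∃ n, i + 2 ≤ n ∧ n ≤ j ∧ chd k n ∉ T := ⟨j, by omega, le_rfl, hcj⟩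
  obtain ⟨hm1, hm2, hm3⟩ := Nat.find_spec hex
  set m := Nat.find hex with hmdef
  have hlow : ∀ t, i + 1 ≤ t → t < m → chd k t ∈ T := by
    intro t h1 h2
    rcases Nat.eq_or_lt_of_le h1 with h1' | h1'
    · rw [← h1']; exact hstep.2
    · by_contra hc
      exact Nat.find_min hex h2 ⟨by omega, by omega, hc⟩
  have hspm : spk k m ∈ T := by
    have h := hmid m (by omega) hm2
    rw [val_formula hk hsub (by omega), if_pos (hlow (m - 1) (by omega) (by omega)),
      if_neg hm3] at h
    by_contra hc; rw [if_neg hc] at h; omega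
  have hadj : (fromEdgeSet T).Adj none (Vtx k m) := by
    rw [fromEdgeSet_adj]
    exact ⟨hspm, by simp [Vtx]⟩
  have hacy := ht.IsAcyclic
  rw [isAcyclic_iff_forall_adj_isBridge] at hacy
  have hb := isBridge_iff.mp (hacy hadj)
  apply hb
  have hnotdel : ∀ a b : Option (ZMod k), s(a, b) ≠ s(none, Vtx k m) →
      ¬ (fromEdgeSet {s(none, Vtx k m)}).Adj a b := by
    intro a b hne hadj'
    rw [fromEdgeSet_adj, Set.mem_singleton_iff] at hadj'
    exact hne hadj'.1
  have h1 : (fromEdgeSet T \ fromEdgeSet {s(none, Vtx k m)}).Adj none (Vtx k (i + 1)) := by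
    rw [sdiff_adj]
    refine ⟨by rw [fromEdgeSet_adj]; exact ⟨hstep.1, by simp [Vtx]⟩, hnotdel _ _ ?_⟩
    intro hcon
    rw [Sym2.eq_iff] at hcon
    rcases hcon with ⟨-, h⟩ | ⟨h, -⟩
    · exact vtx_ne (show i + 1 < m by omega) (by omega) h
    · simp [Vtx] at h
  have hchain : (fromEdgeSet T \ fromEdgeSet {s(none, Vtx k m)}).Reachable
      (Vtx k (i + 1)) (Vtx k m) := by
    apply chain_reach (fun t => Vtx k t) (i + 1) m (by omega)
    intro t h1t h2t
    rw [sdiff_adj]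
    refine ⟨by rw [fromEdgeSet_adj]; exact ⟨hlow t h1t h2t, vtx_ne (by omega) (by omega)⟩,
      hnotdel _ _ ?_⟩
    intro hcon
    rw [Sym2.eq_iff] at hcon
    rcases hcon with ⟨h, -⟩ | ⟨-, h⟩ <;> simp [Vtx] at h
  exact (h1.reachable).trans hchain

lemma bothIn {k : ℕ} (hk : 3 ≤ k) {T : Set (Sym2 (Option (ZMod k)))}
    (hsub : T ⊆ wheelEdges k) (ht : (fromEdgeSet T).IsTree)
    (ht' : (fromEdgeSet (wheelEdges k \ T)).IsTree)
    {i j : ℕ} (hi : 1 ≤ i) (hij : i < j) (hj : j ≤ k)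
    (hvi : valOf T (Vtx k i) = 1)
    (hmid : ∀ m : ℕ, i < m → m ≤ j → valOf T (Vtx k m) = 2)
    (hvj : valOf T (Vtx k (j + 1)) = 1)
    (hci : chd k i ∈ T) (hcj : chd k j ∈ T) : False := by
  classical
  by_cases hw : j + 1 = i + k
  · have hchd : chd k (i - 1) = chd k j := by
      have h1 : Vtx k (i - 1) = Vtx k j := vtx_eq (by omega) ⟨1, by omega⟩
      have h2 : Vtx k (i - 1 + 1) = Vtx k (j + 1) := by
        rw [show i - 1 + 1 = i from by omega]
        exact vtx_eq (by omega) ⟨1, by omega⟩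
      rw [chd, chd, h1, h2]
    rw [val_formula hk hsub hi, if_pos hci,
      if_pos (show chd k (i - 1) ∈ T from by rw [hchd]; exact hcj)] at hvi
    split_ifs at hvi <;> omega
  have hw' : j + 1 - i < k := by omega
  rw [val_formula hk hsub hi, if_pos hci] at hvi
  have hspi : spk k i ∉ T := by
    intro h; rw [if_pos h] at hvi; split_ifs at hvi <;> omega
  have hchi1 : chd k (i - 1) ∉ T := by
    intro h; rw [if_pos h] at hvi; split_ifs at hvi <;> omega
  rw [val_formula hk hsub (show 1 ≤ j + 1 by omega), Nat.add_sub_cancel, if_pos hcj] at hvj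
  have hspj : spk k (j + 1) ∉ T := by
    intro h; rw [if_pos h] at hvj; split_ifs at hvj <;> omega
  have hchj1 : chd k (j + 1) ∉ T := by
    intro h; rw [if_pos h] at hvj; split_ifs at hvj <;> omega
  by_cases hall : ∀ m, i ≤ m → m ≤ j → chd k m ∈ T
  · have hsp : ∀ m, i ≤ m → m ≤ j + 1 → spk k m ∉ T := by
      intro m h1 h2 h
      rcases Nat.eq_or_lt_of_le h1 with rfl | h1'
      · exact hspi h
      rcases Nat.eq_or_lt_of_le h2 with rfl | h2'
      · exact hspj h
      · have hv := hmid m h1' (by omega)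
        rw [val_formula hk hsub (by omega), if_pos h,
          if_pos (hall (m - 1) (by omega) (by omega)),
          if_pos (hall m (by omega) (by omega))] at hv
        omega
    have hclo : ∀ x y, x ∈ {x : Option (ZMod k) | ∃ m : ℕ, i ≤ m ∧ m ≤ j + 1 ∧ x = Vtx k m} →
        (fromEdgeSet T).Adj x y →
        y ∈ {x : Option (ZMod k) | ∃ m : ℕ, i ≤ m ∧ m ≤ j + 1 ∧ x = Vtx k m} := by
      rintro x y ⟨m, h1, h2, rfl⟩ hadj
      rcases adj_cases hsub (show 1 ≤ m by omega) hadj with ⟨hsm, rfl⟩ | ⟨hcm, rfl⟩ | ⟨hcm, rfl⟩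
      · exact absurd hsm (hsp m h1 h2)
      · rcases Nat.eq_or_lt_of_le h2 with rfl | h2'
        · exact absurd hcm hchj1
        · exact ⟨m + 1, by omega, by omega, rfl⟩
      · rcases Nat.eq_or_lt_of_le h1 with h1' | h1'
        · exact absurd (by rwa [← h1'] at hcm : chd k (i - 1) ∈ T) hchi1
        · exact ⟨m - 1, by omega, by omega, rfl⟩
    obtain ⟨w⟩ := ht.isConnected.preconnected (Vtx k i) none
    obtain ⟨m, -, -, hm⟩ := walk_mem hclo w ⟨i, le_rfl, by omega, rfl⟩
    simp [Vtx] at hm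
  · push_neg at hall
    obtain ⟨m₀, hm₀1, hm₀2, hm₀3⟩ := hall
    have hex : ∃ n, i ≤ n ∧ n ≤ j ∧ chd k n ∉ T := ⟨m₀, hm₀1, hm₀2, hm₀3⟩
    obtain ⟨hm1, hm2, hm3⟩ := Nat.find_spec hex
    set m := Nat.find hex with hmdef
    have hmgt : i < m := by
      rcases Nat.eq_or_lt_of_le hm1 with h | h
      · exact absurd (by rwa [← h] at hm3 : chd k i ∉ T) (not_not_intro hci)
      · exact h
    have hmlt : m < j := by
      rcases Nat.eq_or_lt_of_le hm2 with h | h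
      · exact absurd (by rwa [h] at hm3 : chd k j ∉ T) (not_not_intro hcj)
      · exact h
    have hlow : ∀ t, i ≤ t → t < m → chd k t ∈ T := by
      intro t h1 h2
      by_contra hc
      exact Nat.find_min hex h2 ⟨h1, by omega, hc⟩
    have hv1 := hmid m hmgt (by omega)
    rw [val_formula hk hsub (by omega), if_pos (hlow (m - 1) (by omega) (by omega)),
      if_neg hm3] at hv1
    have hspm : spk k m ∈ T := by by_contra h; rw [if_neg h] at hv1; omega
    have hv2 := hmid (m + 1) (by omega) (by omega)
    rw [val_formula hk hsub (by omega), Nat.add_sub_cancel, if_neg hm3] at hv2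
    have hspm1 : spk k (m + 1) ∈ T := by
      by_contra h; rw [if_neg h] at hv2; split_ifs at hv2 <;> omega
    have hchm1 : chd k (m + 1) ∈ T := by
      by_contra h; rw [if_neg h] at hv2; split_ifs at hv2 <;> omega
    have hsub' : wheelEdges k \ T ⊆ wheelEdges k := Set.diff_subset
    have hclo : ∀ x y, x ∈ ({Vtx k m, Vtx k (m + 1)} : Set (Option (ZMod k))) →
        (fromEdgeSet (wheelEdges k \ T)).Adj x y →
        y ∈ ({Vtx k m, Vtx k (m + 1)} : Set (Option (ZMod k))) := by
      intro x y hx hadj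
      rcases hx with rfl | rfl
      · rcases adj_cases hsub' (show 1 ≤ m by omega) hadj with
          ⟨hs, rfl⟩ | ⟨hc, rfl⟩ | ⟨hc, rfl⟩
        · exact absurd hspm hs.2
        · exact Or.inr rfl
        · exact absurd (hlow (m - 1) (by omega) (by omega)) hc.2
      · rcases adj_cases hsub' (show 1 ≤ m + 1 by omega) hadj with
          ⟨hs, rfl⟩ | ⟨hc, rfl⟩ | ⟨hc, rfl⟩
        · exact absurd hspm1 hs.2
        · exact absurd hchm1 hc.2
        · exact Or.inl (by rw [Nat.add_sub_cancel])
    obtain ⟨w⟩ := ht'.isConnected.preconnected (Vtx k m) none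
    have hmem := walk_mem hclo w (Or.inl rfl)
    rcases hmem with h | h <;> simp [Vtx] at h

end WheelAux

theorem stmt5 (k : ℕ) (hk : 3 ≤ k) (T : Set (Sym2 (Option (ZMod k))))
    (hT : IsCoupledTree k T) (i j : ℕ) (hi : 1 ≤ i) (hij : i < j) (hj : j ≤ k)
    (hcase :
      (valOf T (some (i : ZMod k)) = 1 ∧
        (∀ m : ℕ, i < m → m ≤ j → valOf T (some (m : ZMod k)) = 2) ∧
        valOf T (some ((j : ZMod k) + 1)) = 1) ∨
      (valOf T (some (i : ZMod k)) = 2 ∧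
        (∀ m : ℕ, i < m → m ≤ j → valOf T (some (m : ZMod k)) = 1) ∧
        valOf T (some ((j : ZMod k) + 1)) = 2)) :
    Xor' (s(some (i : ZMod k), some ((i : ZMod k) + 1)) ∈ T)
      (s(some (j : ZMod k), some ((j : ZMod k) + 1)) ∈ T) := by
  obtain ⟨hsub, ht, ht'⟩ := hT
  have hrw1 : (some ((j : ZMod k) + 1) : Option (ZMod k)) = WheelAux.Vtx k (j + 1) := by
    simp [WheelAux.Vtx]
  have hgi : s(some (i : ZMod k), some ((i : ZMod k) + 1)) = WheelAux.chd k i := by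
    rw [WheelAux.chd, WheelAux.vtx_succ', WheelAux.Vtx]
  have hgj : s(some (j : ZMod k), some ((j : ZMod k) + 1)) = WheelAux.chd k j := by
    rw [WheelAux.chd, WheelAux.vtx_succ', WheelAux.Vtx]
  rw [hgi, hgj]
  rw [hrw1] at hcase
  have ht'' : (SimpleGraph.fromEdgeSet (wheelEdges k \ (wheelEdges k \ T))).IsTree := by
    rw [Set.diff_diff_cancel_left hsub]; exact ht
  have hsub' : wheelEdges k \ T ⊆ wheelEdges k := Set.diff_subset
  have hchd_mem : ∀ m : ℕ, (WheelAux.chd k m ∈ wheelEdges k \ T) ↔ WheelAux.chd k m ∉ T := by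
    intro m; simp [Set.mem_diff, WheelAux.chd_mem_wheel]
  rcases hcase with ⟨h1, h2, h3⟩ | ⟨h1, h2, h3⟩
  · have h1v : valOf T (WheelAux.Vtx k i) = 1 := h1
    have h2v : ∀ m : ℕ, i < m → m ≤ j → valOf T (WheelAux.Vtx k m) = 2 := h2
    have h3v : valOf T (WheelAux.Vtx k (j + 1)) = 1 := h3
    by_cases hchi : WheelAux.chd k i ∈ T <;> by_cases hchj : WheelAux.chd k j ∈ T
    · exact (WheelAux.bothIn hk hsub ht ht' hi hij hj h1v h2v h3v hchi hchj).elim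
    · exact Or.inl ⟨hchi, hchj⟩
    · exact Or.inr ⟨hchj, hchi⟩
    · exact (WheelAux.bothOut hk hsub ht hi hij hj h2v hchi hchj).elim
  · have h1v : valOf T (WheelAux.Vtx k i) = 2 := h1
    have h2v : ∀ m : ℕ, i < m → m ≤ j → valOf T (WheelAux.Vtx k m) = 1 := h2
    have h3v : valOf T (WheelAux.Vtx k (j + 1)) = 2 := h3
    have h1' : valOf (wheelEdges k \ T) (WheelAux.Vtx k i) = 1 := by
      have := WheelAux.val_add hk hsub (show 1 ≤ i from hi)
      omega
    have h2' : ∀ m : ℕ, i < m → m ≤ j → valOf (wheelEdges k \ T) (WheelAux.Vtx k m) = 2 := by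
      intro m hm1 hm2
      have ha := WheelAux.val_add hk hsub (show 1 ≤ m by omega) (T := T)
      have hb := h2v m hm1 hm2
      omega
    have h3' : valOf (wheelEdges k \ T) (WheelAux.Vtx k (j + 1)) = 1 := by
      have := WheelAux.val_add hk hsub (show 1 ≤ j + 1 by omega) (T := T)
      omega
    by_cases hchi : WheelAux.chd k i ∈ T <;> by_cases hchj : WheelAux.chd k j ∈ T
    · exact (WheelAux.bothOut hk hsub' ht' hi hij hj h2'
        (fun h => ((hchd_mem i).mp h) hchi) (fun h => ((hchd_mem j).mp h) hchj)).elim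
    · exact Or.inl ⟨hchi, hchj⟩
    · exact Or.inr ⟨hchj, hchi⟩
    · exact (WheelAux.bothIn hk hsub' ht' ht'' hi hij hj h1' h2' h3'
        ((hchd_mem i).mpr hchi) ((hchd_mem j).mpr hchj)).elim
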